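/- For any generator enriched lattice (L,G), the rank generating function of the minor poset satisfies F(M(L,G); q) = 1 + q · Σ_{ℓ∈L} (1+q)^{α(ℓ)}, where α(ℓ) = |{g∨ℓ : g ∈ G} \ {ℓ}|. -/
import Mathlib


open Finset

/-- A generator-enriched lattice datum inside an ambient lattice `L`:
a minimal element `z` together with a finite generating set of elements
strictly above `z`. The underlying set of elements consists of all joins
of `z` with subsets of the generating set. -/
structure GEL (L : Type*) [Lattice L] [DecidableEq L] where
  z : L
  gens : Finset L
  lt_gens : ∀ g ∈ gens, z < g

namespace GEL

variable {L K : Type*} [Lattice L] [OrderBot L] [DecidableEq L]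

/-- The underlying set of elements of a generator enriched lattice. -/
def carrier (M : GEL L) : Finset L :=
  M.gens.powerset.image fun X => X.sup id ⊔ M.z

/-- Deletion of a set of generators. -/
def delete (M : GEL L) (I : Finset L) : GEL L :=
  ⟨M.z, M.gens \ I, fun g hg => M.lt_gens g (Finset.mem_sdiff.mp hg).1⟩

/-- Restriction to a set of generators. -/
def restrict (M : GEL L) (I : Finset L) : GEL L :=
  M.delete (M.gens \ I)

/-- Contraction by a set of generators. -/
def contract (M : GEL L) (I : Finset L) : GEL L :=
  ⟨I.sup id ⊔ M.z,
   (M.gens.image fun g => g ⊔ (I.sup id ⊔ M.z)).erase (I.sup id ⊔ M.z),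
   fun g hg => by
     obtain ⟨hne, hg'⟩ := Finset.mem_erase.mp hg
     obtain ⟨h, -, rfl⟩ := Finset.mem_image.mp hg'
     exact lt_of_le_of_ne le_sup_right (Ne.symm hne)⟩

open Classical in
/-- Contraction by an element: contract by all generators below it. -/
noncomputable def contractEl (M : GEL L) (ℓ : L) : GEL L :=
  M.contract (M.gens.filter fun g => g ≤ ℓ)

/-- A single deletion or contraction step. -/
def Step (M N : GEL L) : Prop :=
  ∃ I ⊆ M.gens, N = M.delete I ∨ N = M.contract I

/-- `Minor M N` : `N` is a minor of `M`, i.e. obtained from `M` by a finite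
sequence of deletions and contractions. -/
def Minor (M N : GEL L) : Prop :=
  Relation.ReflTransGen Step M N

/-- The generator enriched lattice on a lattice with `⊥`, with the given generating set. -/
def ofGens (G : Finset L) (hG : ∀ g ∈ G, (⊥ : L) < g) : GEL L :=
  ⟨⊥, G, hG⟩

/-- The underlying type of the minor poset of `T`: all minors of `T`
together with an adjoined minimum `none`. -/
abbrev MP (T : GEL L) := Option {M : GEL L // T.Minor M}

/-- The order relation of the minor poset. -/
def mple (T : GEL L) : MP T → MP T → Prop
  | none, _ => True
  | some _, none => False
  | some A, some B => B.1.Minor A.1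

/-- The rank function of the minor poset. -/
def mrank (T : GEL L) : MP T → ℕ
  | none => 0
  | some A => A.1.gens.card + 1

/-- A parallel: an element `ℓ` and distinct generators `g, h` with
`g ⊔ ℓ = h ⊔ ℓ ≠ ℓ`. -/
def HasParallel (M : GEL L) : Prop :=
  ∃ ℓ ∈ M.carrier, ∃ g ∈ M.gens, ∃ h ∈ M.gens,
    g ≠ h ∧ g ⊔ ℓ = h ⊔ ℓ ∧ g ⊔ ℓ ≠ ℓ

/-- Isomorphism of generator enriched lattices: a join-preserving bijection of the
underlying sets carrying the generating set onto the generating set. -/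
def GIso [Lattice K] [OrderBot K] [DecidableEq K] (M : GEL L) (N : GEL K) : Prop :=
  ∃ f : L → K, Set.BijOn f ↑M.carrier ↑N.carrier ∧
    (∀ a ∈ M.carrier, ∀ b ∈ M.carrier, f (a ⊔ b) = f a ⊔ f b) ∧
    f '' ↑M.gens = ↑N.gens

open Classical in
/-- The image generator enriched lattice `⟨f(I) | f(z)⟩` of a strong map. -/
noncomputable def map [Lattice K] [DecidableEq K] (f : L → K) (M : GEL L) : GEL K :=
  ⟨f M.z, (M.gens.image f).filter fun y => f M.z < y,
   fun g hg => (Finset.mem_filter.mp hg).2⟩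

/-- `T` lifts join irreducibles: for every `ℓ` and generator `g` with `g ≰ ℓ`,
the element `g ⊔ ℓ` is join irreducible in the interval `[ℓ, ⊤]`. -/
def LiftsJI (T : GEL L) : Prop :=
  ∀ ℓ : L, ∀ g ∈ T.gens, ¬ g ≤ ℓ →
    ∀ a b : L, ℓ ≤ a → ℓ ≤ b → g ⊔ ℓ = a ⊔ b → g ⊔ ℓ = a ∨ g ⊔ ℓ = b

end GEL

namespace GEL

variable {L : Type*} [Lattice L] [OrderBot L] [DecidableEq L]

/-- The set of possible generators of a minor with minimum `ℓ`. -/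
def E (T : GEL L) (ℓ : L) : Finset L := (T.gens.image fun g => g ⊔ ℓ).erase ℓ

lemma lt_of_mem_E {T : GEL L} {ℓ g : L} (hg : g ∈ T.E ℓ) : ℓ < g := by
  obtain ⟨hne, hg'⟩ := Finset.mem_erase.mp hg
  obtain ⟨h, -, rfl⟩ := Finset.mem_image.mp hg'
  exact lt_of_le_of_ne le_sup_right (Ne.symm hne)

lemma ext' {M N : GEL L} (hz : M.z = N.z) (hg : M.gens = N.gens) : M = N := by
  cases M; cases N; simp_all

lemma minor_iff (T : GEL L) (hcar : ∀ ℓ : L, ℓ ∈ T.carrier) (N : GEL L) :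
    T.Minor N ↔ N.gens ⊆ T.E N.z := by
  constructor
  · intro h
    induction h with
    | refl =>
      intro g hg
      refine Finset.mem_erase.mpr ⟨(T.lt_gens g hg).ne', Finset.mem_image.mpr ⟨g, hg, ?_⟩⟩
      exact sup_eq_left.mpr (T.lt_gens g hg).le
    | tail _ hstep ih =>
      rename_i M N' _
      obtain ⟨I, hI, hN' | hN'⟩ := hstep
      · subst hN'
        intro g hg
        exact ih (Finset.mem_sdiff.mp hg).1
      · subst hN'
        intro g hg
        obtain ⟨hne, hg'⟩ := Finset.mem_erase.mp hg
        obtain ⟨h, hh, rfl⟩ := Finset.mem_image.mp hg'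
        obtain ⟨hne2, hh'⟩ := Finset.mem_erase.mp (ih hh)
        obtain ⟨g0, hg0, rfl⟩ := Finset.mem_image.mp hh'
        refine Finset.mem_erase.mpr ⟨hne, Finset.mem_image.mpr ⟨g0, hg0, ?_⟩⟩
        have : M.z ≤ I.sup id ⊔ M.z := le_sup_right
        show g0 ⊔ (I.sup id ⊔ M.z) = g0 ⊔ M.z ⊔ (I.sup id ⊔ M.z)
        rw [sup_assoc, sup_eq_right.mpr this]
  · intro h
    obtain ⟨X, hX, hXz⟩ := Finset.mem_image.mp (hcar N.z)
    have hX' : X ⊆ T.gens := Finset.mem_powerset.mp hX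
    have h1 : Step T (T.contract X) := ⟨X, hX', Or.inr rfl⟩
    have hz : (T.contract X).z = N.z := hXz
    have hgens : (T.contract X).gens = T.E N.z := by
      show ((T.gens.image fun g => g ⊔ (X.sup id ⊔ T.z)).erase (X.sup id ⊔ T.z)) = _
      rw [hXz]; rfl
    have h2 : Step (T.contract X) N := by
      refine ⟨(T.contract X).gens \ N.gens, Finset.sdiff_subset, Or.inl ?_⟩
      refine ext' hz.symm ?_
      show N.gens = (T.contract X).gens \ ((T.contract X).gens \ N.gens)
      rw [Finset.sdiff_sdiff_self_left, Finset.inter_eq_right.mpr (by rw [hgens]; exact h)]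
    exact Relation.ReflTransGen.head h1 (Relation.ReflTransGen.single h2)

/-- The equivalence between rank-`(m+1)` elements of the minor poset and pairs
`(ℓ, H)` with `H ⊆ E ℓ` of size `m`. -/
noncomputable def rankEquiv (T : GEL L) (hcar : ∀ ℓ : L, ℓ ∈ T.carrier) (m : ℕ) :
    {p : MP T // mrank T p = m + 1} ≃
      Σ ℓ : L, {H : Finset L // H ∈ (T.E ℓ).powersetCard m} where
  toFun p :=
    match p with
    | ⟨none, h⟩ => absurd h (by simp [mrank])
    | ⟨some A, h⟩ =>
      ⟨A.1.z, A.1.gens, Finset.mem_powersetCard.mpr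
        ⟨(T.minor_iff hcar A.1).mp A.2, by simpa [mrank] using h⟩⟩
  invFun x :=
    ⟨some ⟨⟨x.1, x.2.1, fun g hg =>
        lt_of_mem_E ((Finset.mem_powersetCard.mp x.2.2).1 hg)⟩,
      (T.minor_iff hcar _).mpr (Finset.mem_powersetCard.mp x.2.2).1⟩,
      by simp [mrank, (Finset.mem_powersetCard.mp x.2.2).2]⟩
  left_inv p := by
    match p with
    | ⟨none, h⟩ => exact absurd h (by simp [mrank])
    | ⟨some A, h⟩ => rfl
  right_inv x := rfl

end GEL

/-- The rank generating function of the minor poset: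
`F(M(L,G); q) = 1 + q ∑_{ℓ ∈ L} (1+q)^{α(ℓ)}` with
`α(ℓ) = |{g ∨ ℓ : g ∈ G} \ {ℓ}|`, stated coefficientwise: the number of
elements of `M(L,G)` of rank `k` is the `k`-th coefficient of the right-hand
side. -/
theorem minorPoset_rank_generating_function {L : Type*} [Lattice L] [OrderBot L]
    [DecidableEq L] [Fintype L] (T : GEL L) (hcar : ∀ ℓ : L, ℓ ∈ T.carrier) :
    ∀ k : ℕ,
      (Nat.card {p : GEL.MP T // GEL.mrank T p = k} : ℤ) =
        ((1 + Polynomial.X *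
            ∑ ℓ : L, (1 + Polynomial.X : Polynomial ℤ) ^
              (((T.gens.image fun g => g ⊔ ℓ).erase ℓ).card)).coeff k) := by
  intro k
  cases k with
  | zero =>
    have h1 : Nat.card {p : GEL.MP T // GEL.mrank T p = 0} = 1 := by
      refine Nat.card_eq_one_iff_unique.mpr ⟨⟨fun a b => ?_⟩, ⟨⟨none, rfl⟩⟩⟩
      have ha : a.1 = none := by
        obtain ⟨p, hp⟩ := a
        cases p with
        | none => rfl
        | some A => simp [GEL.mrank] at hp
      have hb : b.1 = none := by
        obtain ⟨p, hp⟩ := b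
        cases p with
        | none => rfl
        | some A => simp [GEL.mrank] at hp
      exact Subtype.ext (ha.trans hb.symm)
    rw [h1]
    simp [Polynomial.mul_coeff_zero]
  | succ m =>
    rw [Nat.card_congr (GEL.rankEquiv T hcar m), Nat.card_eq_fintype_card,
      Fintype.card_sigma]
    simp only [Fintype.card_coe, Finset.card_powersetCard]
    rw [Polynomial.coeff_add, Polynomial.coeff_X_mul, Polynomial.finset_sum_coeff]
    simp only [Polynomial.coeff_one_add_X_pow]
    rw [Polynomial.coeff_one]
    simp only [Nat.succ_ne_zero, if_false]
    push_cast
    rw [zero_add]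
    rfl
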